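/- In the uniform mixture Bernoulli(θ^{(1)}, θ^{(−1)}, t) with 0 < t < 1/2 and odd effective dimension k = ‖θ^{(1)} − θ^{(−1)}‖₀, the Bayes optimal classification error rate equals ∑_{i=0}^{⌊k/2⌋} C(k,i) (1/2 + t)^i (1/2 − t)^{k−i}. -/

import Mathlib

open Finset


/-- Hamming distance between sign vectors (encoded as `Bool` vectors). -/
def ham {d : ℕ} (x y : Fin d → Bool) : ℕ :=
  (Finset.univ.filter fun i => x i ≠ y i).card

lemma card_filter_split {α : Type*} [Fintype α] [DecidableEq α] (S : Finset α)
    (Q : α → Prop) [DecidablePred Q] :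
    (Finset.univ.filter Q).card = (S.filter Q).card + (Sᶜ.filter Q).card := by
  rw [← Finset.card_union_of_disjoint
    (Finset.disjoint_filter_filter disjoint_compl_right),
    ← Finset.filter_union, Finset.union_compl]

lemma card_filter_coe {α : Type*} (s : Finset α) (Q : α → Prop) [DecidablePred Q] :
    (Finset.univ.filter fun i : {x // x ∈ s} => Q ↑i).card = (s.filter Q).card := by
  rw [Finset.univ_eq_attach, Finset.filter_attach, Finset.card_map, Finset.card_attach]

lemma sumBoolFun (V : Type*) [Fintype V] [DecidableEq V] (w : ℕ → ℝ) :
    ∑ v : V → Bool, w ((Finset.univ.filter fun i => v i = true).card)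
      = ∑ j ∈ Finset.range (Fintype.card V + 1), (Fintype.card V).choose j * w j := by
  have hbij : Function.Bijective (fun (s : Finset V) (i : V) => decide (i ∈ s)) := by
    constructor
    · intro s s' h; ext i
      have := congrFun h i; simpa using this
    · intro v; exact ⟨Finset.univ.filter fun i => v i = true, by funext i; simp⟩
  rw [← Fintype.sum_bijective _ hbij (fun s => w s.card) _ (fun s => by simp)]
  rw [← Finset.powerset_univ, Finset.sum_powerset, Finset.card_univ]
  refine Finset.sum_congr rfl fun j hj => ?_
  rw [Finset.sum_congr rfl (fun s hs => by rw [(Finset.mem_powersetCard.mp hs).2]),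
    Finset.sum_const, Finset.card_powersetCard, Finset.card_univ, nsmul_eq_mul]

lemma sum_two_ham (d : ℕ) (θ₁ θₘ : Fin d → Bool) (w : ℕ → ℕ → ℝ)
    (k : ℕ) (hk : k = ham θ₁ θₘ) :
    ∑ x : Fin d → Bool, w (ham x θ₁) (ham x θₘ)
      = ∑ a ∈ Finset.range (k + 1), ∑ b ∈ Finset.range ((d - k) + 1),
          (k.choose a : ℝ) * ((d - k).choose b : ℝ) * w (a + b) ((k - a) + b) := by
  classical
  set S : Finset (Fin d) := Finset.univ.filter (fun i => θ₁ i ≠ θₘ i) with hS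
  have hkS : S.card = k := by rw [hk]; rfl
  have hcardU : Fintype.card {i // i ∈ S} = k := by rw [Fintype.card_coe, hkS]
  have hcardV : Fintype.card {i // i ∈ Sᶜ} = d - k := by
    rw [Fintype.card_coe, Finset.card_compl, hkS, Fintype.card_fin]
  -- the equiv
  let E : ({i // i ∈ S} → Bool) × ({i // i ∈ Sᶜ} → Bool) → (Fin d → Bool) :=
    fun uv i => if h : i ∈ S then xor (uv.1 ⟨i, h⟩) (θ₁ i)
      else xor (uv.2 ⟨i, Finset.mem_compl.mpr h⟩) (θ₁ i)
  have hbij : Function.Bijective E := by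
    constructor
    · rintro ⟨u, v⟩ ⟨u', v'⟩ h
      simp only [Prod.mk.injEq]
      constructor
      · funext i
        have := congrFun h ↑i
        simp only [E, dif_pos i.2] at this
        cases hu : u i <;> cases hu' : u' i <;>
          simp_all <;> cases θ₁ ↑i <;> simp_all
      · funext i
        have hni : ¬ (↑i ∈ S) := Finset.mem_compl.mp i.2
        have := congrFun h ↑i
        simp only [E, dif_neg hni] at this
        cases hu : v i <;> cases hu' : v' i <;>
          simp_all <;> cases θ₁ ↑i <;> simp_all
    · intro x
      refine ⟨⟨fun i => xor (x ↑i) (θ₁ ↑i), fun i => xor (x ↑i) (θ₁ ↑i)⟩, ?_⟩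
      funext i
      by_cases h : i ∈ S <;> simp [E, h] <;> cases x i <;> cases θ₁ i <;> rfl
  rw [← Fintype.sum_bijective E hbij _ _ (fun uv => rfl)]
  have bool1 : ∀ a b : Bool, (¬(xor a b) = b) ↔ a = true := by decide
  have bool2 : ∀ a b c : Bool, b ≠ c → ((¬(xor a b) = c) ↔ ¬ a = true) := by decide
  -- count hamming distances of E uv
  have hcu : ∀ (u : {i // i ∈ S} → Bool) (v : {i // i ∈ Sᶜ} → Bool),
      ham (E (u, v)) θ₁
        = (Finset.univ.filter fun i => u i = true).card
          + (Finset.univ.filter fun i => v i = true).card := by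
    intro u v
    rw [ham, card_filter_split S]
    congr 1
    · rw [← card_filter_coe S]
      congr 1
      ext i
      simp only [Finset.mem_filter, Finset.mem_univ, true_and]
      simp only [E]
      rw [dif_pos i.2]
      exact bool1 _ _
    · rw [← card_filter_coe Sᶜ]
      congr 1
      ext i
      have hni : ¬ ((i : Fin d) ∈ S) := Finset.mem_compl.mp i.2
      simp only [Finset.mem_filter, Finset.mem_univ, true_and]
      simp only [E]
      rw [dif_neg hni]
      exact bool1 _ _
  have hcm : ∀ (u : {i // i ∈ S} → Bool) (v : {i // i ∈ Sᶜ} → Bool),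
      ham (E (u, v)) θₘ
        = (k - (Finset.univ.filter fun i => u i = true).card)
          + (Finset.univ.filter fun i => v i = true).card := by
    intro u v
    rw [ham, card_filter_split S]
    congr 1
    · -- on S the disagreements with θₘ are the agreements with θ₁
      have h1 : (S.filter fun i => E (u, v) i ≠ θₘ i).card
          = (Finset.univ.filter fun i : {i // i ∈ S} => ¬ u i = true).card := by
        rw [← card_filter_coe S (fun i => E (u, v) i ≠ θₘ i)]
        congr 1
        ext i
        have hne : θ₁ (i : Fin d) ≠ θₘ (i : Fin d) := (Finset.mem_filter.mp i.2).2
        simp only [Finset.mem_filter, Finset.mem_univ, true_and]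
        simp only [E]
        rw [dif_pos i.2]
        exact bool2 _ _ _ hne
      have h2 := Finset.card_filter_add_card_filter_not
        (s := (Finset.univ : Finset {i // i ∈ S})) (p := fun i => u i = true)
      rw [Finset.card_univ, hcardU] at h2
      rw [h1]
      omega
    · rw [← card_filter_coe Sᶜ]
      congr 1
      ext i
      have hni : ¬ ((i : Fin d) ∈ S) := Finset.mem_compl.mp i.2
      have hθ : θ₁ (i : Fin d) = θₘ (i : Fin d) := by
        by_contra hc
        exact hni (Finset.mem_filter.mpr ⟨Finset.mem_univ _, hc⟩)
      simp only [Finset.mem_filter, Finset.mem_univ, true_and]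
      simp only [E]
      rw [dif_neg hni, ← hθ]
      exact bool1 _ _
  calc ∑ uv : ({i // i ∈ S} → Bool) × ({i // i ∈ Sᶜ} → Bool), w (ham (E uv) θ₁) (ham (E uv) θₘ)
      = ∑ u : {i // i ∈ S} → Bool, ∑ v : {i // i ∈ Sᶜ} → Bool,
          w ((Finset.univ.filter fun i => u i = true).card
              + (Finset.univ.filter fun i => v i = true).card)
            ((k - (Finset.univ.filter fun i => u i = true).card)
              + (Finset.univ.filter fun i => v i = true).card) := by
        rw [Fintype.sum_prod_type]
        exact Finset.sum_congr rfl fun u _ => Finset.sum_congr rfl fun v _ => by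
          rw [hcu u v, hcm u v]
    _ = ∑ u : {i // i ∈ S} → Bool, ∑ b ∈ Finset.range ((d-k) + 1),
          ((d-k).choose b : ℝ) * w ((Finset.univ.filter fun i => u i = true).card + b)
            ((k - (Finset.univ.filter fun i => u i = true).card) + b) := by
        refine Finset.sum_congr rfl fun u _ => ?_
        rw [sumBoolFun _ (fun b => w ((Finset.univ.filter fun i => u i = true).card + b)
            ((k - (Finset.univ.filter fun i => u i = true).card) + b)), hcardV]
    _ = ∑ b ∈ Finset.range ((d-k) + 1), ((d-k).choose b : ℝ) *
          ∑ u : {i // i ∈ S} → Bool,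
            w ((Finset.univ.filter fun i => u i = true).card + b)
              ((k - (Finset.univ.filter fun i => u i = true).card) + b) := by
        rw [Finset.sum_comm]
        exact Finset.sum_congr rfl fun b _ => by rw [Finset.mul_sum]
    _ = ∑ b ∈ Finset.range ((d-k) + 1), ((d-k).choose b : ℝ) *
          ∑ a ∈ Finset.range (k + 1), (k.choose a : ℝ) * w (a + b) ((k - a) + b) := by
        refine Finset.sum_congr rfl fun b _ => ?_
        rw [sumBoolFun _ (fun a => w (a + b) ((k - a) + b)), hcardU]
    _ = _ := by
        rw [Finset.sum_comm]
        refine Finset.sum_congr rfl fun a _ => ?_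
        rw [Finset.mul_sum]
        refine Finset.sum_congr rfl fun b _ => by ring

lemma oddSplit (k m : ℕ) (hm : k = 2*m+1) (p q : ℝ) :
    ∑ a ∈ Finset.range (k+1),
        (k.choose a : ℝ) * ((1/2) * p^(k - max a (k-a)) * q^(max a (k-a)))
      = ∑ i ∈ Finset.range (k/2+1), (k.choose i : ℝ) * p^i * q^(k-i) := by
  have hk2 : k/2 = m := by omega
  rw [hk2, Finset.range_eq_Ico,
    ← Finset.sum_Ico_consecutive _ (Nat.zero_le (m+1)) (by omega : m+1 ≤ k+1)]
  have h1 : ∑ a ∈ Finset.Ico 0 (m+1),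
      (k.choose a : ℝ) * ((1/2) * p^(k - max a (k-a)) * q^(max a (k-a)))
      = ∑ a ∈ Finset.Ico 0 (m+1), (k.choose a : ℝ) * ((1/2) * p^a * q^(k-a)) := by
    refine Finset.sum_congr rfl fun a ha => ?_
    have ha' : a ≤ m := by simp at ha; omega
    have hmax : max a (k-a) = k - a := max_eq_right (by omega)
    rw [hmax, (by omega : k - (k - a) = a)]
  have h2 : ∑ a ∈ Finset.Ico (m+1) (k+1),
      (k.choose a : ℝ) * ((1/2) * p^(k - max a (k-a)) * q^(max a (k-a)))
      = ∑ i ∈ Finset.Ico 0 (m+1), (k.choose i : ℝ) * ((1/2) * p^i * q^(k-i)) := by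
    refine Finset.sum_nbij' (fun a => k - a) (fun i => k - i) ?_ ?_ ?_ ?_ ?_
    · intro a ha; simp only [Finset.mem_Ico] at ha ⊢; omega
    · intro i hi; simp only [Finset.mem_Ico] at hi ⊢; omega
    · intro a ha; simp only [Finset.mem_Ico] at ha; omega
    · intro i hi; simp only [Finset.mem_Ico] at hi; omega
    · intro a ha
      simp only [Finset.mem_Ico] at ha
      have hmax : max a (k-a) = a := max_eq_left (by omega)
      rw [hmax, (by omega : k - (k - a) = a), Nat.choose_symm (by omega : a ≤ k)]
  rw [h1, h2, ← Finset.sum_add_distrib]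
  exact Finset.sum_congr (by rw [Finset.range_eq_Ico]) fun i hi => by ring


/-- Joint mass of the uniform mixture `Bernoulli(θ¹, θ⁻¹, t)`: `y` is uniform on
`{-1,1}` (encoded `true ↔ 1`), and given `y` each coordinate of `x` equals `θ^{(y)}_i`
with probability `1/2 + t`. -/
noncomputable def bernMass (d : ℕ) (θ₁ θₘ : Fin d → Bool) (t : ℝ)
    (z : (Fin d → Bool) × Bool) : ℝ :=
  (1/2) * (1/2 + t) ^ (d - ham z.1 (if z.2 then θ₁ else θₘ)) *
    (1/2 - t) ^ (ham z.1 (if z.2 then θ₁ else θₘ))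

/-- Clean (standard) error rate of a classifier on the Bernoulli mixture. -/
noncomputable def bernErr (d : ℕ) (θ₁ θₘ : Fin d → Bool) (t : ℝ)
    (h : (Fin d → Bool) → Bool) : ℝ :=
  ∑ z : (Fin d → Bool) × Bool, bernMass d θ₁ θₘ t z * (if h z.1 ≠ z.2 then 1 else 0)

/-- For odd effective dimension `k`, the Bayes optimal error rate of the Bernoulli
mixture equals `∑_{i=0}^{⌊k/2⌋} C(k,i) (1/2+t)^i (1/2-t)^{k-i}`. -/
theorem bernoulli_bayes_error_odd
    (d : ℕ) (θ₁ θₘ : Fin d → Bool) (t : ℝ) (ht0 : 0 < t) (ht : t < 1/2)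
    (k : ℕ) (hk : k = ham θ₁ θₘ) (hodd : Odd k) :
    IsLeast {r : ℝ | ∃ h : (Fin d → Bool) → Bool, r = bernErr d θ₁ θₘ t h}
      (∑ i ∈ Finset.range (k / 2 + 1),
        (k.choose i : ℝ) * (1/2 + t) ^ i * (1/2 - t) ^ (k - i)) := by
    classical
  obtain ⟨m, hm⟩ := hodd
  have hq0 : (0:ℝ) < 1/2 - t := by linarith
  have hp0 : (0:ℝ) < 1/2 + t := by linarith
  have hqp : (1/2 - t : ℝ) ≤ 1/2 + t := by linarith
  have hkd : k ≤ d := by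
    rw [hk, ham]
    exact (Finset.card_filter_le _ _).trans (by simp)
  have hhamle : ∀ x y : Fin d → Bool, ham x y ≤ d := fun x y =>
    (Finset.card_filter_le _ _).trans (by simp [ham] )
  -- rewrite of the error as a sum over x
  have herr : ∀ h : (Fin d → Bool) → Bool,
      bernErr d θ₁ θₘ t h = ∑ x : Fin d → Bool, bernMass d θ₁ θₘ t (x, !h x) := by
    intro h
    rw [bernErr, Fintype.sum_prod_type]
    refine Finset.sum_congr rfl fun x _ => ?_
    rw [Fintype.sum_bool]
    cases hx : h x <;> simp
  -- antitonicity of the mass in the hamming distance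
  have anti : ∀ h h' : ℕ, h ≤ h' → h' ≤ d →
      (1/2:ℝ)*(1/2+t)^(d-h')*(1/2-t)^h' ≤ (1/2)*(1/2+t)^(d-h)*(1/2-t)^h := by
    intro a b hab hbd
    obtain ⟨e, he⟩ := Nat.exists_eq_add_of_le hab
    have h1 : d - a = (d - b) + e := by omega
    subst he
    rw [h1, pow_add, pow_add]
    have he1 : (1/2 - t:ℝ)^e ≤ (1/2 + t)^e := pow_le_pow_left₀ hq0.le hqp e
    have hposa : (0:ℝ) ≤ (1/2+t)^(d-(a+e)) := by positivity
    have hposb : (0:ℝ) ≤ (1/2-t)^a := by positivity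
    calc (1/2:ℝ)*((1/2+t)^(d-(a+e)))*((1/2-t)^a * (1/2-t)^e)
        = (1/2)*((1/2+t)^(d-(a+e)))*((1/2-t)^e) * ((1/2-t)^a) := by ring
      _ ≤ (1/2)*((1/2+t)^(d-(a+e)))*((1/2+t)^e) * ((1/2-t)^a) := by
          have : (0:ℝ) ≤ (1/2)*((1/2+t)^(d-(a+e))) := by positivity
          nlinarith [mul_le_mul_of_nonneg_left he1 this]
      _ = (1/2)*((1/2+t)^(d-(a+e))*(1/2+t)^e)*((1/2-t)^a) := by ring
  -- the min of the two masses
  have hmass : ∀ (x : Fin d → Bool) (y : Bool), bernMass d θ₁ θₘ t (x, y)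
      = (1/2) * (1/2+t)^(d - ham x (if y then θ₁ else θₘ)) * (1/2-t)^(ham x (if y then θ₁ else θₘ)) := by
    intro x y; rfl
  have hmin : ∀ x : Fin d → Bool,
      min (bernMass d θ₁ θₘ t (x, true)) (bernMass d θ₁ θₘ t (x, false))
        = (1/2) * (1/2+t)^(d - max (ham x θ₁) (ham x θₘ)) * (1/2-t)^(max (ham x θ₁) (ham x θₘ)) := by
    intro x
    have e1 : (if (true : Bool) = true then θ₁ else θₘ) = θ₁ := by simp
    have e2 : (if (false : Bool) = true then θ₁ else θₘ) = θₘ := by simp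
    rw [hmass, hmass, e1, e2]
    rcases le_total (ham x θ₁) (ham x θₘ) with h | h
    · rw [max_eq_right h, min_eq_right (anti _ _ h (hhamle x θₘ))]
    · rw [max_eq_left h, min_eq_left (anti _ _ h (hhamle x θ₁))]
  -- the value of the bayes error
  have hsummin : ∑ x : Fin d → Bool,
        min (bernMass d θ₁ θₘ t (x, true)) (bernMass d θ₁ θₘ t (x, false))
      = ∑ i ∈ Finset.range (k / 2 + 1),
          (k.choose i : ℝ) * (1/2 + t) ^ i * (1/2 - t) ^ (k - i) := by
    simp_rw [hmin]
    rw [sum_two_ham d θ₁ θₘ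
      (fun h1 h2 => (1/2) * (1/2+t)^(d - max h1 h2) * (1/2-t)^(max h1 h2)) k hk]
    have step : ∀ a ∈ Finset.range (k+1), ∀ b ∈ Finset.range ((d-k)+1),
        (k.choose a : ℝ) * ((d-k).choose b : ℝ) *
            ((1/2) * (1/2+t)^(d - max (a+b) ((k-a)+b)) * (1/2-t)^(max (a+b) ((k-a)+b)))
          = (((d-k).choose b : ℝ) * (1/2+t)^((d-k) - b) * (1/2-t)^b)
            * ((k.choose a : ℝ) * ((1/2) * (1/2+t)^(k - max a (k-a)) * (1/2-t)^(max a (k-a)))) := by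
      intro a ha b hb
      rw [Finset.mem_range] at ha hb
      have hM : max a (k - a) ≤ k := max_le (by omega) (Nat.sub_le _ _)
      have hmax : max (a+b) ((k-a)+b) = max a (k-a) + b := (max_add_add_right a (k-a) b).symm ▸ rfl
      rw [hmax]
      have hexp : d - (max a (k-a) + b) = (k - max a (k-a)) + ((d-k) - b) := by omega
      rw [hexp, pow_add, pow_add]
      ring
    rw [Finset.sum_congr rfl (fun a ha => Finset.sum_congr rfl (fun b hb => step a ha b hb))]
    rw [Finset.sum_comm]
    have hone : ∑ b ∈ Finset.range ((d-k)+1),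
        (((d-k).choose b : ℝ) * (1/2+t)^((d-k) - b) * (1/2-t)^b) = 1 := by
      have := add_pow ((1/2 - t):ℝ) ((1/2 + t):ℝ) (d-k)
      have h1 : ((1/2 - t) + (1/2 + t) : ℝ) = 1 := by ring
      rw [h1, one_pow] at this
      exact (Finset.sum_congr rfl fun b hb => by ring).trans this.symm
    calc ∑ b ∈ Finset.range ((d-k)+1), ∑ a ∈ Finset.range (k+1),
          (((d-k).choose b : ℝ) * (1/2+t)^((d-k) - b) * (1/2-t)^b)
            * ((k.choose a : ℝ) * ((1/2) * (1/2+t)^(k - max a (k-a)) * (1/2-t)^(max a (k-a))))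
        = (∑ b ∈ Finset.range ((d-k)+1), (((d-k).choose b : ℝ) * (1/2+t)^((d-k) - b) * (1/2-t)^b))
          * (∑ a ∈ Finset.range (k+1),
              (k.choose a : ℝ) * ((1/2) * (1/2+t)^(k - max a (k-a)) * (1/2-t)^(max a (k-a)))) := by
          rw [Finset.sum_mul]
          exact Finset.sum_congr rfl fun b _ => by rw [Finset.mul_sum]
      _ = ∑ a ∈ Finset.range (k+1),
              (k.choose a : ℝ) * ((1/2) * (1/2+t)^(k - max a (k-a)) * (1/2-t)^(max a (k-a))) := by
          rw [hone, one_mul]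
      _ = _ := oddSplit k m hm (1/2+t) (1/2-t)
  constructor
  · -- membership: the nearest-center rule attains the bound
    refine ⟨fun x => decide (bernMass d θ₁ θₘ t (x, false) ≤ bernMass d θ₁ θₘ t (x, true)), ?_⟩
    rw [herr, ← hsummin]
    refine (Finset.sum_congr rfl fun x _ => ?_).symm
    by_cases hx : bernMass d θ₁ θₘ t (x, false) ≤ bernMass d θ₁ θₘ t (x, true)
    · have hdec : decide (bernMass d θ₁ θₘ t (x, false) ≤ bernMass d θ₁ θₘ t (x, true)) = true := by
        simp [hx]
      rw [hdec, Bool.not_true, min_eq_right hx]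
    · have hdec : decide (bernMass d θ₁ θₘ t (x, false) ≤ bernMass d θ₁ θₘ t (x, true)) = false := by
        simp [hx]
      push_neg at hx
      rw [hdec, Bool.not_false, min_eq_left hx.le]
  · -- lower bound
    rintro r ⟨h, rfl⟩
    rw [herr, ← hsummin]
    refine Finset.sum_le_sum fun x _ => ?_
    cases hx : h x
    · simpa using min_le_left _ _
    · simpa using min_le_right _ _
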